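/- If X is a compact metrizable space and ≿ is a continuous, gapless, antisymmetric preference on X, then every maximal domain of ≿ is arc-connected (in fact homeomorphic to a point or to [0,1]). -/

import Mathlib

variable {X : Type*}

/-- A set on which the preference is complete. -/
def IsPrefDomain (r : X → X → Prop) (A : Set X) : Prop :=
  ∀ x ∈ A, ∀ y ∈ A, r x y ∨ r y x

/-- A maximal domain of comparability. -/
def IsMaxPrefDomain (r : X → X → Prop) (A : Set X) : Prop :=
  IsPrefDomain r A ∧ ∀ B : Set X, IsPrefDomain r B → A ⊆ B → B = A

/-- Strict preference. -/
def StrictPref (r : X → X → Prop) (x y : X) : Prop :=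
  r x y ∧ ¬ r y x

/-- Gapless preference. -/
def Gapless (r : X → X → Prop) : Prop :=
  ∀ x y, StrictPref r x y → ∃ z, StrictPref r x z ∧ StrictPref r z y

/-- Continuity: upper and lower sets are closed. -/
def ContinuousPref [TopologicalSpace X] (r : X → X → Prop) : Prop :=
  ∀ x : X, IsClosed {y | r y x} ∧ IsClosed {y | r x y}
theorem mem_of_comparable {r : X → X → Prop} (hrefl : Reflexive r) {D : Set X}
    (hD : IsMaxPrefDomain r D) {z : X} (hz : ∀ d ∈ D, r z d ∨ r d z) : z ∈ D := by
  have hdom : IsPrefDomain r (insert z D) := by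
    rintro a (rfl | ha) b (rfl | hb)
    · exact Or.inl (hrefl _)
    · exact hz b hb
    · exact (hz a ha).symm
    · exact hD.1 a ha b hb
  have h := hD.2 _ hdom (Set.subset_insert _ _)
  rw [← h]; exact Set.mem_insert _ _

theorem domain_closed [TopologicalSpace X] {r : X → X → Prop} (hrefl : Reflexive r)
    (hcont : ContinuousPref r) {D : Set X} (hD : IsMaxPrefDomain r D) : IsClosed D := by
  rw [← closure_eq_iff_isClosed]
  refine Set.Subset.antisymm ?_ subset_closure
  intro z hzc
  refine mem_of_comparable hrefl hD fun d hd => ?_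
  by_contra h
  push_neg at h
  have hopen : IsOpen ({w | r w d}ᶜ ∩ {w | r d w}ᶜ) :=
    ((hcont d).1.isOpen_compl).inter ((hcont d).2.isOpen_compl)
  have hzmem : z ∈ {w | r w d}ᶜ ∩ {w | r d w}ᶜ := ⟨h.1, h.2⟩
  obtain ⟨e, ⟨he1, he2⟩, heD⟩ := mem_closure_iff.mp hzc _ hopen hzmem
  rcases hD.1 e heD d hd with h' | h'
  · exact he1 h'
  · exact he2 h'

theorem dense_domain {r : X → X → Prop} (hrefl : Reflexive r) (htrans : Transitive r)
    (hgap : Gapless r) {D : Set X} (hD : IsMaxPrefDomain r D)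
    {a b : X} (ha : a ∈ D) (hb : b ∈ D) (hab : StrictPref r a b) :
    ∃ c ∈ D, StrictPref r a c ∧ StrictPref r c b := by
  by_contra h
  push_neg at h
  obtain ⟨z, haz, hzb⟩ := hgap a b hab
  have hzD : z ∈ D := by
    refine mem_of_comparable hrefl hD fun d hd => ?_
    by_cases hda : r d a
    · exact Or.inr (htrans hda haz.1)
    by_cases hbd : r b d
    · exact Or.inl (htrans hzb.1 hbd)
    have had : r a d := (hD.1 a ha d hd).resolve_right hda
    have hdb : r d b := (hD.1 d hd b hb).resolve_right hbd
    exact absurd ⟨hdb, hbd⟩ (h d hd ⟨had, hda⟩)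
  exact h z hzD haz hzb

theorem arc_of_le [TopologicalSpace X] [CompactSpace X]
    [TopologicalSpace.MetrizableSpace X]
    (r : X → X → Prop)
    (hrefl : Reflexive r) (htrans : Transitive r) (hanti : AntiSymmetric r)
    (hcont : ContinuousPref r) (hgap : Gapless r)
    (D : Set X) (hD : IsMaxPrefDomain r D)
    (x : X) (hx : x ∈ D) (y : X) (hy : y ∈ D) (hrxy : r x y) (hne : x ≠ y) :
    ∃ f : unitInterval → X, Continuous f ∧ Function.Injective f ∧
      Set.range f ⊆ D ∧ f 0 = x ∧ f 1 = y := by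
  classical
  set I : Set X := {z | z ∈ D ∧ r x z ∧ r z y} with hIdef
  have hxI : x ∈ I := ⟨hx, hrefl x, hrxy⟩
  have hyI : y ∈ I := ⟨hy, hrxy, hrefl y⟩
  letI linI : LinearOrder ↥I :=
    { le := fun a b => r a b
      le_refl := fun a => hrefl a
      le_trans := fun a b c h1 h2 => htrans h1 h2
      le_antisymm := fun a b h1 h2 => Subtype.ext (hanti h1 h2)
      le_total := fun a b => hD.1 a a.2.1 b b.2.1
      toDecidableLE := fun _ _ => Classical.dec _ }
  have hle_def : ∀ a b : ↥I, (a ≤ b) = r a.val b.val := fun _ _ => rfl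
  have hlt_iff : ∀ a b : ↥I, a < b ↔ r a.val b.val ∧ ¬ r b.val a.val := by
    intro a b
    rw [lt_iff_le_not_ge]
    exact Iff.rfl
  -- I is closed, hence compact
  have hDc : IsClosed D := domain_closed hrefl hcont hD
  have hIc : IsClosed I :=
    hDc.inter ((hcont x).2.inter (hcont y).1)
  haveI hcmpI : CompactSpace ↥I := isCompact_iff_compactSpace.mp hIc.isCompact
  -- interval sets are open in the subspace topology
  have hIoi : ∀ a : ↥I, Set.Ioi a = Subtype.val ⁻¹' {w | r w a.val}ᶜ := by
    intro a; ext z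
    simp only [Set.mem_Ioi, Set.mem_preimage, Set.mem_compl_iff, Set.mem_setOf_eq]
    constructor
    · intro h hz
      exact (lt_iff_le_not_ge.mp h).2 hz
    · intro h
      refine lt_iff_le_not_ge.mpr ⟨?_, h⟩
      exact (hD.1 a.val a.2.1 z.val z.2.1).resolve_right h
  have hIio : ∀ a : ↥I, Set.Iio a = Subtype.val ⁻¹' {w | r a.val w}ᶜ := by
    intro a; ext z
    simp only [Set.mem_Iio, Set.mem_preimage, Set.mem_compl_iff, Set.mem_setOf_eq]
    constructor
    · intro h hz
      exact (lt_iff_le_not_ge.mp h).2 hz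
    · intro h
      refine lt_iff_le_not_ge.mpr ⟨?_, h⟩
      exact (hD.1 z.val z.2.1 a.val a.2.1).resolve_right h
  have hgenopen : ∀ s ∈ {s : Set ↥I | ∃ a, s = Set.Ioi a ∨ s = Set.Iio a}, IsOpen s := by
    rintro s ⟨a, rfl | rfl⟩
    · rw [hIoi]
      exact ((hcont a.val).1.isOpen_compl).preimage continuous_subtype_val
    · rw [hIio]
      exact ((hcont a.val).2.isOpen_compl).preimage continuous_subtype_val
  haveI hOT : OrderTopology ↥I := by
    constructor
    refine le_antisymm (le_generateFrom hgenopen) ?_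
    let t2 : TopologicalSpace ↥I :=
      TopologicalSpace.generateFrom {s : Set ↥I | ∃ a, s = Set.Ioi a ∨ s = Set.Iio a}
    let tI : TopologicalSpace ↥I := instTopologicalSpaceSubtype
    haveI hot2 : @OrderTopology ↥I t2 _ := @OrderTopology.mk _ t2 _ rfl
    haveI ht2 : @T2Space ↥I t2 :=
      @OrderClosedTopology.to_t2Space ↥I t2 _
        (@OrderTopology.to_orderClosedTopology ↥I t2 _ hot2)
    have hcid : @Continuous ↥I ↥I tI t2 id := by
      exact continuous_id_iff_le.mpr (le_generateFrom hgenopen)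
    have h3 : @Continuous ↥I ↥I t2 tI id := by
      exact @Homeomorph.continuous_symm ↥I ↥I tI t2
        (@Continuous.homeoOfEquivCompactToT2 ↥I ↥I tI t2 hcmpI ht2 (Equiv.refl ↥I)
          (by exact hcid))
    exact continuous_id_iff_le.mp h3
  -- dense order
  haveI hdense : DenselyOrdered ↥I := by
    constructor
    intro a b hab
    rw [hlt_iff] at hab
    obtain ⟨c, hcD, hac, hcb⟩ := dense_domain hrefl htrans hgap hD a.2.1 b.2.1 hab
    refine ⟨⟨c, hcD, htrans a.2.2.1 hac.1, htrans hcb.1 b.2.2.2⟩, ?_, ?_⟩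
    · exact (hlt_iff _ _).mpr hac
    · exact (hlt_iff _ _).mpr hcb
  -- separable
  haveI hsep : TopologicalSpace.SeparableSpace ↥I := by
    letI : MetricSpace ↥I := TopologicalSpace.metrizableSpaceMetric ↥I
    infer_instance
  obtain ⟨T, hTc, hTd⟩ := TopologicalSpace.exists_countable_dense ↥I
  set xI : ↥I := ⟨x, hxI⟩ with hxIdef
  set yI : ↥I := ⟨y, hyI⟩ with hyIdef
  have hbot : ∀ z : ↥I, xI ≤ z := fun z => z.2.2.1
  have htop : ∀ z : ↥I, z ≤ yI := fun z => z.2.2.2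
  have hxy' : xI < yI := by
    rw [hlt_iff]
    exact ⟨hrxy, fun h => hne (hanti hrxy h)⟩
  set S : Set ↥I := T \ {xI, yI} with hSdef
  have densS : ∀ a b : ↥I, a < b → ∃ s ∈ S, a < s ∧ s < b := by
    intro a b hab
    obtain ⟨c, hc1, hc2⟩ := exists_between hab
    obtain ⟨s, hsT, hs⟩ := hTd.exists_mem_open isOpen_Ioo ⟨c, hc1, hc2⟩
    refine ⟨s, ⟨hsT, ?_⟩, hs.1, hs.2⟩
    simp only [Set.mem_insert_iff, Set.mem_singleton_iff]
    push_neg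
    constructor
    · exact fun h => absurd (h ▸ hs.1) (not_lt.mpr (hbot a))
    · exact fun h => absurd (h ▸ hs.2) (not_lt.mpr (htop b))
  haveI : Countable ↥S := (hTc.mono Set.diff_subset).to_subtype
  haveI : Nonempty ↥S := by
    obtain ⟨s, hs, _⟩ := densS xI yI hxy'
    exact ⟨⟨s, hs⟩⟩
  haveI : DenselyOrdered ↥S := by
    constructor
    intro a b hab
    obtain ⟨s, hs, h1, h2⟩ := densS a.val b.val (Subtype.coe_lt_coe.mpr hab)
    exact ⟨⟨s, hs⟩, Subtype.coe_lt_coe.mp h1, Subtype.coe_lt_coe.mp h2⟩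
  haveI : NoMinOrder ↥S := by
    constructor
    intro a
    have hxa : xI < a.val := lt_of_le_of_ne (hbot a.val) fun h => a.2.2 (Or.inl h.symm)
    obtain ⟨s, hs, h1, h2⟩ := densS xI a.val hxa
    exact ⟨⟨s, hs⟩, Subtype.coe_lt_coe.mp h2⟩
  haveI : NoMaxOrder ↥S := by
    constructor
    intro a
    have hay : a.val < yI := lt_of_le_of_ne (htop a.val) fun h => a.2.2 (Or.inr h)
    obtain ⟨s, hs, h1, h2⟩ := densS a.val yI hay
    exact ⟨⟨s, hs⟩, Subtype.coe_lt_coe.mp h1⟩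
  -- rational parameterization
  haveI : Nonempty ↥(Set.Ioo (0:ℚ) 1) := ⟨⟨1/2, by norm_num⟩⟩
  obtain ⟨g0⟩ := Order.iso_of_countable_dense ↥(Set.Ioo (0:ℚ) 1) ↥S
  set u : ↥(Set.Ioo (0:ℚ) 1) → ↥I := fun q => ((g0 q : ↥S) : ↥I) with hudef
  have humono : StrictMono u := fun a b h => Subtype.coe_lt_coe.mpr (g0.strictMono h)
  have husurj : ∀ s ∈ S, ∃ q, u q = s := by
    intro s hs
    obtain ⟨q, hq⟩ := g0.surjective ⟨s, hs⟩
    exact ⟨q, by rw [hudef]; simp [hq]⟩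
  have densU : ∀ a b : ↥I, a < b → ∃ q, a < u q ∧ u q < b := by
    intro a b hab
    obtain ⟨s, hs, h1, h2⟩ := densS a b hab
    obtain ⟨q, hq⟩ := husurj s hs
    exact ⟨q, hq ▸ h1, hq ▸ h2⟩
  -- least upper bounds exist
  have lub : ∀ A : Set ↥I, A.Nonempty → ∃ z, IsLUB A z := by
    intro A hA
    obtain ⟨z, hz⟩ := (isClosed_closure (s := A)).isCompact.exists_isGreatest hA.closure
    refine ⟨z, fun a ha => hz.2 (subset_closure ha), fun b hb => ?_⟩
    have hsub : closure A ⊆ Set.Iic b := by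
      rw [← isClosed_Iic.closure_eq]
      exact closure_mono fun a ha => hb ha
    exact hsub hz.1
  set St : unitInterval → Set ↥I :=
    fun t => insert xI (u '' {q : ↥(Set.Ioo (0:ℚ) 1) | ((q : ℚ) : ℝ) < (t : ℝ)}) with hStdef
  have hStne : ∀ t, (St t).Nonempty := fun t => ⟨xI, Set.mem_insert _ _⟩
  choose f hf using fun t => lub (St t) (hStne t)
  have hmono : StrictMono f := by
    intro t t' htt
    have htt' : (t : ℝ) < (t' : ℝ) := htt
    obtain ⟨q1, hq11, hq12⟩ := exists_rat_btwn htt'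
    obtain ⟨q2, hq21, hq22⟩ := exists_rat_btwn hq12
    have hq1m : q1 ∈ Set.Ioo (0:ℚ) 1 := by
      constructor
      · exact_mod_cast lt_of_le_of_lt t.2.1 hq11
      · exact_mod_cast lt_of_lt_of_le (hq21.trans (hq22.trans_le t'.2.2)) le_rfl
    have hq2m : q2 ∈ Set.Ioo (0:ℚ) 1 := by
      constructor
      · exact_mod_cast (lt_of_le_of_lt t.2.1 hq11).trans hq21
      · exact_mod_cast lt_of_lt_of_le hq22 t'.2.2
    have hA : f t ≤ u ⟨q1, hq1m⟩ := by
      refine (hf t).2 ?_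
      rintro z (rfl | ⟨q, hq, rfl⟩)
      · exact hbot _
      · refine humono.monotone ?_
        have : ((q : ℚ) : ℝ) < ((q1 : ℚ) : ℝ) := lt_trans hq hq11
        exact_mod_cast le_of_lt this
    have hB : u ⟨q1, hq1m⟩ < u ⟨q2, hq2m⟩ := by
      refine humono ?_
      exact_mod_cast hq21
    have hC : u ⟨q2, hq2m⟩ ≤ f t' := by
      refine (hf t').1 ?_
      exact Set.mem_insert_of_mem _ ⟨⟨q2, hq2m⟩, hq22, rfl⟩
    exact lt_of_le_of_lt hA (lt_of_lt_of_le hB hC)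
  have hsurj : Function.Surjective f := by
    intro z
    set A : Set ℝ := insert 0 {w | ∃ q : ↥(Set.Ioo (0:ℚ) 1), ((q : ℚ) : ℝ) = w ∧ u q ≤ z}
      with hAdef
    have hAne : A.Nonempty := ⟨0, Set.mem_insert _ _⟩
    have hAbdd : BddAbove A := by
      refine ⟨1, ?_⟩
      rintro w (rfl | ⟨q, rfl, hq⟩)
      · norm_num
      · exact_mod_cast le_of_lt q.2.2
    have ht0mem : sSup A ∈ Set.Icc (0:ℝ) 1 := by
      constructor
      · exact le_csSup hAbdd (Set.mem_insert _ _)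
      · refine csSup_le hAne ?_
        rintro w (rfl | ⟨q, rfl, hq⟩)
        · norm_num
        · exact_mod_cast le_of_lt q.2.2
    refine ⟨⟨sSup A, ht0mem⟩, ?_⟩
    have h1 : f ⟨sSup A, ht0mem⟩ ≤ z := by
      refine (hf _).2 ?_
      rintro w (rfl | ⟨q, hq, rfl⟩)
      · exact hbot z
      · obtain ⟨a, haA, hqa⟩ := exists_lt_of_lt_csSup hAne hq
        rcases haA with rfl | ⟨q', rfl, hq'⟩
        · exact absurd hqa (not_lt.mpr (by exact_mod_cast le_of_lt q.2.1))
        · refine le_trans (humono.monotone ?_) hq'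
          exact_mod_cast le_of_lt hqa
    have h2 : z ≤ f ⟨sSup A, ht0mem⟩ := by
      by_contra hcon
      push_neg at hcon
      obtain ⟨q, hq1, hq2⟩ := densU _ _ hcon
      have hqA : ((q : ℚ) : ℝ) ∈ A := Set.mem_insert_of_mem _ ⟨q, rfl, le_of_lt hq2⟩
      have hle : ((q : ℚ) : ℝ) ≤ sSup A := le_csSup hAbdd hqA
      rcases lt_or_eq_of_le hle with hlt | heq
      · have : u q ∈ St ⟨sSup A, ht0mem⟩ := Set.mem_insert_of_mem _ ⟨q, hlt, rfl⟩
        exact absurd ((hf _).1 this) (not_le.mpr hq1)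
      · obtain ⟨q', h1', h2'⟩ := densU _ _ hq2
        have hq'A : ((q' : ℚ) : ℝ) ∈ A := Set.mem_insert_of_mem _ ⟨q', rfl, le_of_lt h2'⟩
        have : ((q' : ℚ) : ℝ) ≤ ((q : ℚ) : ℝ) := heq ▸ le_csSup hAbdd hq'A
        have hq'q : q' ≤ q := by exact_mod_cast this
        exact absurd h1' (not_lt.mpr (humono.monotone hq'q))
    exact le_antisymm h1 h2
  -- assemble
  let e : unitInterval ≃o ↥I := StrictMono.orderIsoOfSurjective f hmono hsurj
  let h : unitInterval ≃ₜ ↥I := e.toHomeomorph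
  have he0 : e 0 = xI := by
    refine le_antisymm ?_ (hbot _)
    obtain ⟨t0, ht0⟩ := e.surjective xI
    calc e 0 ≤ e t0 := e.monotone t0.2.1
      _ = xI := ht0
  have he1 : e 1 = yI := by
    refine le_antisymm (htop _) ?_
    obtain ⟨t1, ht1⟩ := e.surjective yI
    calc yI = e t1 := ht1.symm
      _ ≤ e 1 := e.monotone t1.2.2
  refine ⟨fun t => ((e t : ↥I) : X), ?_, ?_, ?_, ?_, ?_⟩
  · exact continuous_subtype_val.comp h.continuous
  · exact Subtype.val_injective.comp e.injective
  · rintro _ ⟨t, rfl⟩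
    exact (e t).2.1
  · show ((e 0 : ↥I) : X) = x
    rw [he0]
  · show ((e 1 : ↥I) : X) = y
    rw [he1]

theorem maxDomain_arc_connected [TopologicalSpace X] [CompactSpace X]
    [TopologicalSpace.MetrizableSpace X]
    (r : X → X → Prop)
    (hrefl : Reflexive r) (htrans : Transitive r) (hanti : AntiSymmetric r)
    (hcont : ContinuousPref r) (hgap : Gapless r)
    (D : Set X) (hD : IsMaxPrefDomain r D) :
    ∀ x ∈ D, ∀ y ∈ D, x ≠ y →
      ∃ f : unitInterval → X, Continuous f ∧ Function.Injective f ∧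
        Set.range f ⊆ D ∧ f 0 = x ∧ f 1 = y := by
  intro x hx y hy hne
  rcases hD.1 x hx y hy with h | h
  · exact arc_of_le r hrefl htrans hanti hcont hgap D hD x hx y hy h hne
  · obtain ⟨f, hc, hi, hr, h0, h1⟩ :=
      arc_of_le r hrefl htrans hanti hcont hgap D hD y hy x hx h hne.symm
    refine ⟨f ∘ unitInterval.symm, hc.comp unitInterval.continuous_symm,
      hi.comp unitInterval.symm_involutive.injective, ?_, ?_, ?_⟩
    · rintro _ ⟨t, rfl⟩
      exact hr ⟨_, rfl⟩
    · show f (unitInterval.symm 0) = x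
      rw [unitInterval.symm_zero, h1]
    · show f (unitInterval.symm 1) = y
      rw [unitInterval.symm_one, h0]
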